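/- Let $n \geq 1$ be an integer and $p \in (0,1)$. There exist a probability space and random variables $L$ and $B$ defined on it such that $L$ has the Poisson distribution with parameter $np$, $B$ has the binomial distribution with parameters $(n,p)$, and $E|L - B| \leq np^2$. -/

import Mathlib

open MeasureTheory Real ENNReal ProbabilityTheory
open scoped NNReal

namespace PoiBinCoupling

/-! ### Analytic preliminaries -/

lemma exp_neg_le_quad {x : ℝ} (hx : 0 ≤ x) : Real.exp (-x) ≤ 1 - x + x ^ 2 / 2 := by
  have key : ∀ y : ℝ, HasDerivAt (fun t : ℝ => 1 - t + t ^ 2 / 2 - Real.exp (-t))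
      (-1 + y + Real.exp (-y)) y := by
    intro y
    have h1 : HasDerivAt (fun t : ℝ => Real.exp (-t)) (Real.exp (-y) * (-1)) y :=
      (Real.hasDerivAt_exp (-y)).comp y ((hasDerivAt_id y).neg)
    have h2 : HasDerivAt (fun t : ℝ => 1 - t + t ^ 2 / 2) (-1 + y) y := by
      have := (((hasDerivAt_id y).const_sub 1).add
        (((hasDerivAt_id y).pow 2).div_const 2))
      refine this.congr_deriv ?_
      ring_nf
      simp [mul_comm]
    have := h2.sub h1
    refine this.congr_deriv ?_
    ring
  have mono : MonotoneOn (fun t : ℝ => 1 - t + t ^ 2 / 2 - Real.exp (-t)) (Set.Ici 0) := by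
    apply monotoneOn_of_deriv_nonneg (convex_Ici 0)
    · exact Continuous.continuousOn (by continuity)
    · intro y _
      exact (key y).differentiableAt.differentiableWithinAt
    · intro y hy
      rw [(key y).deriv]
      have := Real.add_one_le_exp (-y)
      linarith
  have := mono Set.self_mem_Ici hx hx
  simp only [Real.exp_zero] at this
  norm_num at this
  linarith

lemma exp_tsum (x : ℝ) : ∑' n : ℕ, x ^ n / (Nat.factorial n) = Real.exp x := by
  rw [Real.exp_eq_exp_ℝ, NormedSpace.exp_eq_tsum_div]

lemma exp_summable (x : ℝ) : Summable (fun n : ℕ => x ^ n / (Nat.factorial n)) :=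
  Real.summable_pow_div_factorial x

lemma exp_summable_shift (x : ℝ) :
    Summable (fun n : ℕ => x ^ (n + 1) / (Nat.factorial (n + 1))) :=
  (summable_nat_add_iff 1).mpr (exp_summable x)

lemma exp_tsum_shift (x : ℝ) :
    ∑' n : ℕ, x ^ (n + 1) / (Nat.factorial (n + 1)) = Real.exp x - 1 := by
  have h := Summable.tsum_eq_zero_add (exp_summable x)
  rw [exp_tsum x] at h
  simp only [pow_zero, Nat.factorial_zero, Nat.cast_one, div_one] at h
  linarith

/-! ### PMF weighted-sum helper lemmas -/

variable {α β : Type*}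

lemma tsum_pure_mul (a : α) (c : α → ℝ≥0∞) :
    ∑' z, (PMF.pure a) z * c z = c a := by
  rw [tsum_eq_single a]
  · simp [PMF.pure_apply]
  · intro b hb
    simp [PMF.pure_apply, hb]

lemma tsum_bind_mul (X : PMF α) (f : α → PMF β) (c : β → ℝ≥0∞) :
    ∑' z, (X.bind f) z * c z = ∑' a, X a * ∑' z, f a z * c z := by
  simp only [PMF.bind_apply]
  calc ∑' z, (∑' a, X a * (f a) z) * c z
      = ∑' z, ∑' a, X a * (f a) z * c z := by
        congr 1; ext z; rw [ENNReal.tsum_mul_right]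
    _ = ∑' a, ∑' z, X a * (f a) z * c z := ENNReal.tsum_comm
    _ = ∑' a, X a * ∑' z, (f a) z * c z := by
        congr 1; ext a; rw [← ENNReal.tsum_mul_left]; congr 1; ext z; ring

lemma tsum_map_mul (X : PMF α) (g : α → β) (c : β → ℝ≥0∞) :
    ∑' z, (X.map g) z * c z = ∑' a, X a * c (g a) := by
  rw [PMF.map, tsum_bind_mul]
  congr 1
  ext a
  rw [Function.comp_apply, tsum_pure_mul]

lemma conv_apply (X Y : PMF ℕ) (k : ℕ) :
    (X.bind fun a => Y.map (a + ·)) k = ∑ i ∈ Finset.range (k + 1), X i * Y (k - i) := by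
  rw [PMF.bind_apply]
  have hmap : ∀ a : ℕ, (Y.map (a + ·)) k = if a ≤ k then Y (k - a) else 0 := by
    intro a
    rw [PMF.map_apply]
    by_cases h : a ≤ k
    · rw [if_pos h, tsum_eq_single (k - a)]
      · rw [if_pos (by omega)]
      · intro b hb
        rw [if_neg (by omega)]
    · rw [if_neg h, ENNReal.tsum_eq_zero.mpr]
      intro b
      rw [if_neg (by omega)]
  simp only [hmap]
  rw [tsum_eq_sum (s := Finset.range (k + 1))]
  · apply Finset.sum_congr rfl
    intro i hi
    rw [if_pos (by simp at hi; omega)]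
  · intro a ha
    rw [if_neg (by simp at ha; omega), mul_zero]

lemma conv_ofReal (X Y : PMF ℕ) (f g : ℕ → ℝ) (hf : ∀ i, 0 ≤ f i) (hg : ∀ i, 0 ≤ g i)
    (hX : ∀ i, X i = ENNReal.ofReal (f i)) (hY : ∀ i, Y i = ENNReal.ofReal (g i)) (k : ℕ) :
    (X.bind fun a => Y.map (a + ·)) k =
      ENNReal.ofReal (∑ i ∈ Finset.range (k + 1), f i * g (k - i)) := by
  rw [conv_apply, ENNReal.ofReal_sum_of_nonneg (fun i _ => mul_nonneg (hf i) (hg _))]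
  exact Finset.sum_congr rfl fun i _ => by rw [hX, hY, ENNReal.ofReal_mul (hf i)]

/-! ### Real convolution identities -/

lemma poisson_conv (a b : ℝ) (k : ℕ) :
    ∑ i ∈ Finset.range (k + 1),
      (Real.exp (-a) * a ^ i / (Nat.factorial i)) *
        (Real.exp (-b) * b ^ (k - i) / (Nat.factorial (k - i))) =
      Real.exp (-(a + b)) * (a + b) ^ k / (Nat.factorial k) := by
  rw [add_pow]
  rw [Finset.mul_sum, Finset.sum_div]
  apply Finset.sum_congr rfl
  intro i hi
  have hik : i ≤ k := by simp at hi; omega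
  have hfac : (Nat.factorial k : ℝ) = (k.choose i) * (Nat.factorial i) * (Nat.factorial (k - i)) := by
    exact_mod_cast (Nat.choose_mul_factorial_mul_factorial hik).symm
  have h1 : (Nat.factorial i : ℝ) ≠ 0 := by positivity
  have h2 : (Nat.factorial (k - i) : ℝ) ≠ 0 := by positivity
  have h3 : (Nat.factorial k : ℝ) ≠ 0 := by positivity
  have h4 : (k.choose i : ℝ) ≠ 0 := by
    exact_mod_cast (Nat.choose_pos hik).ne'
  rw [neg_add, Real.exp_add, hfac]
  field_simp

def bern (p : ℝ) : ℕ → ℝ := fun k => if k = 0 then 1 - p else if k = 1 then p else 0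

lemma bern_nonneg {p : ℝ} (hp : p ∈ Set.Ioo (0 : ℝ) 1) (k : ℕ) : 0 ≤ bern p k := by
  obtain ⟨h0, h1⟩ := hp
  unfold bern
  split_ifs <;> linarith

def binP (p : ℝ) (n k : ℕ) : ℝ := (n.choose k : ℝ) * p ^ k * (1 - p) ^ (n - k)

lemma binP_nonneg {p : ℝ} (hp : p ∈ Set.Ioo (0 : ℝ) 1) (n k : ℕ) : 0 ≤ binP p n k := by
  obtain ⟨h0, h1⟩ := hp
  unfold binP
  have : (0:ℝ) ≤ 1 - p := by linarith
  positivity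

lemma binom_conv (p : ℝ) (n k : ℕ) :
    ∑ i ∈ Finset.range (k + 1), binP p n i * bern p (k - i) = binP p (n + 1) k := by
  cases k with
  | zero =>
      rw [Finset.sum_range_succ, Finset.range_zero, Finset.sum_empty, zero_add]
      unfold binP bern
      simp only [Nat.choose_zero_right, Nat.cast_one, pow_zero, Nat.sub_zero,
        eq_self_iff_true, if_true]
      rw [pow_succ]
      ring
  | succ j =>
      rw [Finset.sum_range_succ, Finset.sum_range_succ]
      have hzero : ∑ i ∈ Finset.range j, binP p n i * bern p (j + 1 - i) = 0 := by
        apply Finset.sum_eq_zero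
        intro i hi
        have hij : i < j := by simpa using hi
        unfold bern
        rw [if_neg (by omega), if_neg (by omega), mul_zero]
      rw [hzero, zero_add]
      have e1 : j + 1 - j = 1 := by omega
      have e2 : j + 1 - (j + 1) = 0 := by omega
      rw [e1, e2]
      have hb1 : bern p 1 = p := by unfold bern; norm_num
      have hb0 : bern p 0 = 1 - p := by unfold bern; norm_num
      rw [hb1, hb0]
      by_cases hjn : j + 1 ≤ n
      · unfold binP
        have hsub : n + 1 - (j + 1) = n - j := by omega
        have h1 : n - j = (n - (j + 1)) + 1 := by omega
        rw [hsub, Nat.choose_succ_succ n j, h1]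
        push_cast
        ring
      · by_cases hjn2 : j ≤ n
        · have hj : j = n := by omega
          subst hj
          unfold binP
          rw [Nat.choose_succ_self, Nat.choose_self, Nat.choose_self, Nat.sub_self, Nat.sub_self]
          push_cast
          ring
        · have hn : n < j := by omega
          unfold binP
          rw [Nat.choose_eq_zero_of_lt (by omega), Nat.choose_eq_zero_of_lt (by omega),
            Nat.choose_eq_zero_of_lt (by omega)]
          push_cast
          ring

/-! ### The single-trial coupling -/

noncomputable def theta (p : ℝ) : ℝ := 1 - (1 - p) * Real.exp p

lemma theta_nonneg (p : ℝ) : 0 ≤ theta p := by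
  unfold theta
  have h : 1 - p ≤ Real.exp (-p) := by
    have := Real.add_one_le_exp (-p)
    linarith
  have hep : 0 < Real.exp p := Real.exp_pos p
  have : (1 - p) * Real.exp p ≤ Real.exp (-p) * Real.exp p :=
    mul_le_mul_of_nonneg_right h hep.le
  rw [← Real.exp_add, neg_add_cancel, Real.exp_zero] at this
  linarith

lemma theta_le_one' {p : ℝ} (hp1 : p ≤ 1) : theta p ≤ 1 := by
  unfold theta
  nlinarith [Real.exp_pos p]

lemma theta_le_one {p : ℝ} (hp1 : p ≤ 1) : (theta p).toNNReal ≤ 1 :=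
  Real.toNNReal_le_one.mpr (theta_le_one' hp1)

noncomputable def trial (p : ℝ) (hp1 : p ≤ 1) : PMF (ℕ × ℕ) :=
  (poissonPMF p.toNNReal).bind fun l =>
    if l = 0 then
      (PMF.bernoulli (theta p).toNNReal (theta_le_one hp1)).map
        (fun b => ((0 : ℕ), if b then 1 else 0))
    else PMF.pure (l, 1)

lemma poissonPMF_apply (r : ℝ≥0) (k : ℕ) :
    poissonPMF r k = ENNReal.ofReal (Real.exp (-(r : ℝ)) * (r : ℝ) ^ k / (Nat.factorial k)) := rfl

lemma poissonPMF_apply' {p : ℝ} (hp0 : 0 ≤ p) (k : ℕ) :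
    poissonPMF p.toNNReal k =
      ENNReal.ofReal (Real.exp (-p) * p ^ k / (Nat.factorial k)) := by
  rw [poissonPMF_apply, Real.coe_toNNReal p hp0]

lemma trial_fst {p : ℝ} (hp1 : p ≤ 1) :
    (trial p hp1).map Prod.fst = poissonPMF p.toNNReal := by
  rw [trial, PMF.map_bind]
  have h : (fun l : ℕ => (if l = 0 then
      (PMF.bernoulli (theta p).toNNReal (theta_le_one hp1)).map
        (fun b => ((0 : ℕ), if b then 1 else 0))
    else PMF.pure (l, 1)).map Prod.fst) = fun l => PMF.pure l := by
    funext l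
    rcases Nat.eq_zero_or_pos l with h0 | h0
    · subst h0
      rw [if_pos rfl, PMF.map_comp]
      have : (Prod.fst ∘ fun b : Bool => ((0 : ℕ), if b then 1 else 0)) =
          Function.const Bool (0 : ℕ) := by funext b; rfl
      rw [this, PMF.map_const]
    · rw [if_neg (by omega), PMF.pure_map]
  rw [h, PMF.bind_pure]

lemma exp_neg_le_one {p : ℝ} (hp0 : 0 ≤ p) : Real.exp (-p) ≤ 1 :=
  Real.exp_le_one_iff.mpr (by linarith)

lemma one_sub_le_exp_neg (p : ℝ) : 1 - p ≤ Real.exp (-p) := by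
  have := Real.add_one_le_exp (-p)
  linarith

lemma exp_mul_theta {p : ℝ} : Real.exp (-p) * theta p = Real.exp (-p) - (1 - p) := by
  have hee : Real.exp (-p) * Real.exp p = 1 := by
    rw [← Real.exp_add, neg_add_cancel, Real.exp_zero]
  unfold theta
  linear_combination (p - 1) * hee

lemma trial_snd {p : ℝ} (hp : p ∈ Set.Ioo (0 : ℝ) 1) (k : ℕ) :
    ((trial p hp.2.le).map Prod.snd) k = ENNReal.ofReal (bern p k) := by
  obtain ⟨hp0, hp1⟩ := hp
  rw [trial, PMF.map_bind]
  -- compute the sub-distributions mapped along snd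
  have hG0 : ((PMF.bernoulli (theta p).toNNReal (theta_le_one hp1.le)).map
      (fun b => ((0 : ℕ), if b then 1 else 0))).map Prod.snd =
      (PMF.bernoulli (theta p).toNNReal (theta_le_one hp1.le)).map
        (fun b => if b then 1 else 0) := by
    rw [PMF.map_comp]
    rfl
  rw [PMF.bind_apply]
  have key : ∀ l : ℕ, ((if l = 0 then
      (PMF.bernoulli (theta p).toNNReal (theta_le_one hp1.le)).map
        (fun b => ((0 : ℕ), if b then 1 else 0))
    else PMF.pure (l, 1)).map Prod.snd) k =
      if l = 0 then ((PMF.bernoulli (theta p).toNNReal (theta_le_one hp1.le)).map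
        (fun b => if b then 1 else 0)) k
      else (if k = 1 then 1 else 0) := by
    intro l
    rcases Nat.eq_zero_or_pos l with h0 | h0
    · subst h0; rw [if_pos rfl, if_pos rfl, hG0]
    · rw [if_neg (by omega), if_neg (by omega), PMF.pure_map, PMF.pure_apply]
      simp
  simp only [key]
  rw [tsum_eq_zero_add' ENNReal.summable]
  simp only [eq_self_iff_true, if_true, Nat.succ_ne_zero, if_false]
  have hx0 : poissonPMF p.toNNReal 0 = ENNReal.ofReal (Real.exp (-p)) := by
    rw [poissonPMF_apply' hp0.le]
    norm_num
  have hbmass : ∀ j : ℕ, ((PMF.bernoulli (theta p).toNNReal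
      (theta_le_one hp1.le)).map (fun b => if b then 1 else 0)) j =
      if j = 0 then 1 - ENNReal.ofReal (theta p)
      else if j = 1 then ENNReal.ofReal (theta p) else 0 := by
    intro j
    rw [PMF.map_apply, tsum_bool]
    simp only [PMF.bernoulli_apply]
    rcases j with _ | _ | j <;> simp <;> rfl
  rcases k with _ | _ | k
  · -- k = 0
    rw [hbmass 0, if_pos rfl, hx0]
    have hz : (if (0 : ℕ) = 1 then (1 : ℝ≥0∞) else 0) = 0 := by norm_num
    rw [hz]
    simp only [mul_zero, tsum_zero, add_zero]
    have h1 : (1 : ℝ≥0∞) - ENNReal.ofReal (theta p) = ENNReal.ofReal (1 - theta p) := by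
      rw [← ENNReal.ofReal_one, ← ENNReal.ofReal_sub _ (theta_nonneg p)]
    rw [h1, ← ENNReal.ofReal_mul (Real.exp_nonneg _)]
    have hb : bern p 0 = 1 - p := by unfold bern; norm_num
    rw [hb]
    congr 1
    have hee : Real.exp (-p) * Real.exp p = 1 := by
      rw [← Real.exp_add, neg_add_cancel, Real.exp_zero]
    unfold theta
    linear_combination (1 - p) * hee
  · -- k = 1
    have hsum1 : ∑' l : ℕ, poissonPMF p.toNNReal (l + 1) =
        1 - ENNReal.ofReal (Real.exp (-p)) := by
      have h : ∑' l : ℕ, poissonPMF p.toNNReal l = poissonPMF p.toNNReal 0 +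
          ∑' l : ℕ, poissonPMF p.toNNReal (l + 1) := tsum_eq_zero_add' ENNReal.summable
      have h1 : (1 : ℝ≥0∞) = (∑' l : ℕ, poissonPMF p.toNNReal (l + 1)) +
          ENNReal.ofReal (Real.exp (-p)) := by
        rw [← PMF.tsum_coe (poissonPMF p.toNNReal), h, hx0, add_comm]
      exact (ENNReal.sub_eq_of_eq_add ENNReal.ofReal_ne_top h1).symm
    have hz : (if (1 : ℕ) = 1 then (1 : ℝ≥0∞) else 0) = 1 := by norm_num
    rw [hbmass 1, if_neg (by omega : ¬ (1 : ℕ) = 0), if_pos rfl, hz]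
    simp only [mul_one]
    rw [hsum1, hx0]
    rw [← ENNReal.ofReal_mul (Real.exp_nonneg _), exp_mul_theta]
    have h2 : (1 : ℝ≥0∞) - ENNReal.ofReal (Real.exp (-p)) =
        ENNReal.ofReal (1 - Real.exp (-p)) := by
      rw [← ENNReal.ofReal_one, ← ENNReal.ofReal_sub _ (Real.exp_nonneg _)]
    rw [h2, ← ENNReal.ofReal_add (by nlinarith [one_sub_le_exp_neg p])
      (by nlinarith [exp_neg_le_one hp0.le])]
    have hb : bern p 1 = p := by unfold bern; norm_num
    rw [hb]
    congr 1
    ring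
  · -- k ≥ 2
    have h1 : ¬ (k + 2 = 0) := by omega
    have h2 : ¬ (k + 2 = 1) := by omega
    rw [hbmass (k + 2), if_neg h1, if_neg h2]
    have hz : (if k + 2 = 1 then (1 : ℝ≥0∞) else 0) = 0 := by rw [if_neg h2]
    rw [hz]
    simp only [mul_zero, tsum_zero, add_zero]
    unfold bern
    rw [if_neg h1, if_neg h2, ENNReal.ofReal_zero]

/-! ### Cost of the single trial -/

noncomputable def costc (z : ℕ × ℕ) : ℝ≥0∞ := ENNReal.ofReal |(z.1 : ℝ) - (z.2 : ℝ)|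

noncomputable def costE (X : PMF (ℕ × ℕ)) : ℝ≥0∞ := ∑' z, X z * costc z

lemma trial_cost {p : ℝ} (hp : p ∈ Set.Ioo (0 : ℝ) 1) :
    costE (trial p hp.2.le) ≤ ENNReal.ofReal (p ^ 2) := by
  obtain ⟨hp0, hp1⟩ := hp
  rw [costE, trial, tsum_bind_mul]
  have key : ∀ l : ℕ, (∑' z, (if l = 0 then
      (PMF.bernoulli (theta p).toNNReal (theta_le_one hp1.le)).map
        (fun b => ((0 : ℕ), if b then 1 else 0))
    else PMF.pure (l, 1)) z * costc z) =
      if l = 0 then ENNReal.ofReal (theta p) else ENNReal.ofReal ((l : ℝ) - 1) := by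
    intro l
    rcases Nat.eq_zero_or_pos l with h0 | h0
    · subst h0
      rw [if_pos rfl, if_pos rfl, tsum_map_mul, tsum_bool]
      simp only [PMF.bernoulli_apply]
      unfold costc
      norm_num
      rfl
    · rw [if_neg (by omega), if_neg (by omega), tsum_pure_mul]
      simp only [costc]
      congr 1
      have h1 : (1 : ℝ) ≤ (l : ℝ) := by exact_mod_cast h0
      push_cast
      rw [abs_of_nonneg (by linarith)]
  simp only [key]
  rw [tsum_eq_zero_add' ENNReal.summable]
  simp only [eq_self_iff_true, if_true, Nat.succ_ne_zero, if_false]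
  have hx0 : poissonPMF p.toNNReal 0 = ENNReal.ofReal (Real.exp (-p)) := by
    rw [poissonPMF_apply' hp0.le]; norm_num
  have hterm : ∀ l : ℕ, poissonPMF p.toNNReal (l + 1) * ENNReal.ofReal ((l + 1 : ℕ) - (1:ℝ)) =
      ENNReal.ofReal (Real.exp (-p) * p ^ (l + 1) / (Nat.factorial (l + 1)) * l) := by
    intro l
    rw [poissonPMF_apply' hp0.le, ← ENNReal.ofReal_mul (by positivity)]
    congr 1
    push_cast
    ring
  simp only [hterm]
  have hsummand : ∀ l : ℕ, Real.exp (-p) * p ^ (l + 1) / (Nat.factorial (l + 1)) * l =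
      Real.exp (-p) * p * (p ^ l / (Nat.factorial l)) -
        Real.exp (-p) * (p ^ (l + 1) / (Nat.factorial (l + 1))) := by
    intro l
    have h1 : (Nat.factorial l : ℝ) ≠ 0 := by positivity
    have h2 : ((l : ℝ) + 1) ≠ 0 := by positivity
    rw [Nat.factorial_succ]
    push_cast
    field_simp
    ring
  have hsA : Summable (fun l : ℕ => Real.exp (-p) * p * (p ^ l / (Nat.factorial l))) :=
    (exp_summable p).mul_left _
  have hsB : Summable (fun l : ℕ => Real.exp (-p) * (p ^ (l + 1) / (Nat.factorial (l + 1)))) :=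
    (exp_summable_shift p).mul_left _
  have hsum : ∑' l : ℕ, Real.exp (-p) * p ^ (l + 1) / (Nat.factorial (l + 1)) * l =
      Real.exp (-p) * p * Real.exp p - Real.exp (-p) * (Real.exp p - 1) := by
    calc ∑' l : ℕ, Real.exp (-p) * p ^ (l + 1) / (Nat.factorial (l + 1)) * l
        = ∑' l : ℕ, (Real.exp (-p) * p * (p ^ l / (Nat.factorial l)) -
            Real.exp (-p) * (p ^ (l + 1) / (Nat.factorial (l + 1)))) := by
          exact tsum_congr hsummand
      _ = (∑' l : ℕ, Real.exp (-p) * p * (p ^ l / (Nat.factorial l))) -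
            ∑' l : ℕ, Real.exp (-p) * (p ^ (l + 1) / (Nat.factorial (l + 1))) :=
          Summable.tsum_sub hsA hsB
      _ = Real.exp (-p) * p * Real.exp p - Real.exp (-p) * (Real.exp p - 1) := by
          rw [tsum_mul_left, tsum_mul_left, exp_tsum, exp_tsum_shift]
  have hofsum : ∑' l : ℕ, ENNReal.ofReal
      (Real.exp (-p) * p ^ (l + 1) / (Nat.factorial (l + 1)) * l) =
      ENNReal.ofReal (Real.exp (-p) * p * Real.exp p - Real.exp (-p) * (Real.exp p - 1)) := by
    rw [← hsum]
    rw [← ENNReal.ofReal_tsum_of_nonneg]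
    · intro l; positivity
    · apply Summable.congr (hsA.sub hsB)
      intro l
      rw [hsummand l]
  rw [hofsum, hx0, ← ENNReal.ofReal_mul (Real.exp_nonneg _)]
  rw [← ENNReal.ofReal_add]
  · apply ENNReal.ofReal_le_ofReal
    have hee : Real.exp (-p) * Real.exp p = 1 := by
      rw [← Real.exp_add, neg_add_cancel, Real.exp_zero]
    have e1 : Real.exp (-p) * p * Real.exp p = p := by linear_combination p * hee
    have e2 : Real.exp (-p) * (Real.exp p - 1) = 1 - Real.exp (-p) := by
      linear_combination hee
    have hq := exp_neg_le_quad hp0.le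
    rw [exp_mul_theta, e1, e2]
    nlinarith [hq]
  · rw [exp_mul_theta]
    nlinarith [one_sub_le_exp_neg p]
  · have hee : Real.exp (-p) * Real.exp p = 1 := by
      rw [← Real.exp_add, neg_add_cancel, Real.exp_zero]
    have e1 : Real.exp (-p) * p * Real.exp p = p := by linear_combination p * hee
    have e2 : Real.exp (-p) * (Real.exp p - 1) = 1 - Real.exp (-p) := by
      linear_combination hee
    rw [e1, e2]
    nlinarith [one_sub_le_exp_neg p]

/-! ### The n-fold coupling -/

noncomputable def coup (p : ℝ) (hp1 : p ≤ 1) : ℕ → PMF (ℕ × ℕ)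
  | 0 => PMF.pure (0, 0)
  | n + 1 => (coup p hp1 n).bind fun z => (trial p hp1).map (fun w => (z.1 + w.1, z.2 + w.2))

lemma coup_fst_succ {p : ℝ} (hp1 : p ≤ 1) (n : ℕ) :
    (coup p hp1 (n + 1)).map Prod.fst =
      ((coup p hp1 n).map Prod.fst).bind fun a => ((trial p hp1).map Prod.fst).map (a + ·) := by
  show ((coup p hp1 n).bind fun z => (trial p hp1).map
      (fun w => (z.1 + w.1, z.2 + w.2))).map Prod.fst = _
  rw [PMF.map_bind, PMF.bind_map]
  congr 1
  funext z
  rw [PMF.map_comp]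
  simp only [Function.comp_apply]
  rw [PMF.map_comp]
  rfl

lemma coup_snd_succ {p : ℝ} (hp1 : p ≤ 1) (n : ℕ) :
    (coup p hp1 (n + 1)).map Prod.snd =
      ((coup p hp1 n).map Prod.snd).bind fun a => ((trial p hp1).map Prod.snd).map (a + ·) := by
  show ((coup p hp1 n).bind fun z => (trial p hp1).map
      (fun w => (z.1 + w.1, z.2 + w.2))).map Prod.snd = _
  rw [PMF.map_bind, PMF.bind_map]
  congr 1
  funext z
  rw [PMF.map_comp]
  simp only [Function.comp_apply]
  rw [PMF.map_comp]
  rfl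

lemma coup_fst {p : ℝ} (hp : p ∈ Set.Ioo (0 : ℝ) 1) (n : ℕ) (k : ℕ) :
    ((coup p hp.2.le n).map Prod.fst) k =
      ENNReal.ofReal (Real.exp (-((n : ℝ) * p)) * ((n : ℝ) * p) ^ k / (Nat.factorial k)) := by
  obtain ⟨hp0, hp1⟩ := hp
  induction n generalizing k with
  | zero =>
      show ((PMF.pure ((0 : ℕ), (0 : ℕ))).map Prod.fst) k = _
      rw [PMF.pure_map, PMF.pure_apply]
      rcases Nat.eq_zero_or_pos k with hk | hk
      · subst hk; norm_num
      · rw [if_neg (by omega)]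
        rw [Nat.cast_zero, zero_mul, zero_pow (by omega)]
        norm_num
  | succ n ih =>
      rw [coup_fst_succ]
      rw [conv_ofReal _ _
        (fun i => Real.exp (-((n : ℝ) * p)) * ((n : ℝ) * p) ^ i / (Nat.factorial i))
        (fun i => Real.exp (-p) * p ^ i / (Nat.factorial i))
        (fun i => by positivity) (fun i => by positivity)
        (fun i => ih i)
        (fun i => by rw [trial_fst, poissonPMF_apply' hp0.le]) k]
      rw [poisson_conv]
      have hc : ((n : ℝ) + 1) * p = (n : ℝ) * p + p := by ring
      congr 2 <;> push_cast <;> rw [hc]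

lemma coup_snd {p : ℝ} (hp : p ∈ Set.Ioo (0 : ℝ) 1) (n : ℕ) (k : ℕ) :
    ((coup p hp.2.le n).map Prod.snd) k = ENNReal.ofReal (binP p n k) := by
  induction n generalizing k with
  | zero =>
      show ((PMF.pure ((0 : ℕ), (0 : ℕ))).map Prod.snd) k = _
      rw [PMF.pure_map, PMF.pure_apply]
      rcases Nat.eq_zero_or_pos k with hk | hk
      · subst hk; simp [binP]
      · rw [if_neg (by omega)]
        unfold binP
        rw [Nat.choose_eq_zero_of_lt (by omega)]
        norm_num
  | succ n ih =>
      rw [coup_snd_succ]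
      rw [conv_ofReal _ _ (fun i => binP p n i) (fun i => bern p i)
        (fun i => binP_nonneg hp n i) (fun i => bern_nonneg hp i)
        (fun i => ih i) (fun i => trial_snd hp i) k]
      rw [binom_conv]

lemma costc_sub (z w : ℕ × ℕ) :
    costc (z.1 + w.1, z.2 + w.2) ≤ costc z + costc w := by
  unfold costc
  rw [← ENNReal.ofReal_add (abs_nonneg _) (abs_nonneg _)]
  apply ENNReal.ofReal_le_ofReal
  push_cast
  calc |(z.1 : ℝ) + w.1 - ((z.2 : ℝ) + w.2)|
      = |((z.1 : ℝ) - z.2) + ((w.1 : ℝ) - w.2)| := by ring_nf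
    _ ≤ |(z.1 : ℝ) - z.2| + |(w.1 : ℝ) - w.2| := abs_add_le _ _

lemma coup_cost {p : ℝ} (hp : p ∈ Set.Ioo (0 : ℝ) 1) (n : ℕ) :
    costE (coup p hp.2.le n) ≤ (n : ℝ≥0∞) * ENNReal.ofReal (p ^ 2) := by
  induction n with
  | zero =>
      rw [costE]
      show ∑' z, (PMF.pure ((0 : ℕ), (0 : ℕ))) z * costc z ≤ _
      rw [tsum_pure_mul]
      unfold costc
      norm_num
  | succ n ih =>
      have step : costE (coup p hp.2.le (n + 1)) ≤
          costE (coup p hp.2.le n) + costE (trial p hp.2.le) := by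
        rw [costE]
        show ∑' z, ((coup p hp.2.le n).bind fun z => (trial p hp.2.le).map
            (fun w => (z.1 + w.1, z.2 + w.2))) z * costc z ≤ _
        rw [tsum_bind_mul]
        have inner : ∀ z : ℕ × ℕ,
            (∑' y, ((trial p hp.2.le).map (fun w => (z.1 + w.1, z.2 + w.2))) y * costc y) ≤
              costc z + costE (trial p hp.2.le) := by
          intro z
          rw [tsum_map_mul]
          calc ∑' w, (trial p hp.2.le) w * costc (z.1 + w.1, z.2 + w.2)
              ≤ ∑' w, (trial p hp.2.le) w * (costc z + costc w) := by
                apply ENNReal.tsum_le_tsum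
                intro w
                exact mul_le_mul_right (costc_sub z w) _
            _ = (∑' w, (trial p hp.2.le) w * costc z) +
                  ∑' w, (trial p hp.2.le) w * costc w := by
                rw [← ENNReal.tsum_add]
                congr 1; funext w; rw [mul_add]
            _ = costc z + costE (trial p hp.2.le) := by
                rw [ENNReal.tsum_mul_right, PMF.tsum_coe, one_mul, costE]
        calc ∑' z, (coup p hp.2.le n) z * ∑' y,
              ((trial p hp.2.le).map (fun w => (z.1 + w.1, z.2 + w.2))) y * costc y
            ≤ ∑' z, (coup p hp.2.le n) z * (costc z + costE (trial p hp.2.le)) := by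
              apply ENNReal.tsum_le_tsum
              intro z
              exact mul_le_mul_right (inner z) _
          _ = (∑' z, (coup p hp.2.le n) z * costc z) +
                ∑' z, (coup p hp.2.le n) z * costE (trial p hp.2.le) := by
              rw [← ENNReal.tsum_add]
              congr 1
              funext z
              rw [mul_add]
          _ = costE (coup p hp.2.le n) + costE (trial p hp.2.le) := by
              rw [ENNReal.tsum_mul_right, PMF.tsum_coe, one_mul]
              rfl
      calc costE (coup p hp.2.le (n + 1))
          ≤ costE (coup p hp.2.le n) + costE (trial p hp.2.le) := step
        _ ≤ (n : ℝ≥0∞) * ENNReal.ofReal (p ^ 2) + ENNReal.ofReal (p ^ 2) :=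
            add_le_add ih (trial_cost hp)
        _ = (((n : ℕ) + 1 : ℕ) : ℝ≥0∞) * ENNReal.ofReal (p ^ 2) := by
            push_cast
            ring
  
end PoiBinCoupling

open PoiBinCoupling in
/-- For `n ≥ 1` and `p ∈ (0,1)` there exists a coupling `(L, B)` of a Poisson(`n * p`)
random variable `L` and a binomial(`n`, `p`) random variable `B` with
`E|L - B| ≤ n * p ^ 2`. -/
theorem exists_poisson_binomial_coupling_le (n : ℕ) (hn : 1 ≤ n)
    (p : ℝ) (hp : p ∈ Set.Ioo (0 : ℝ) 1) :
    ∃ (Ω : Type) (_ : MeasurableSpace Ω) (μ : Measure Ω) (_ : IsProbabilityMeasure μ)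
      (L B : Ω → ℕ), Measurable L ∧ Measurable B ∧
      (∀ k : ℕ, μ {ω | L ω = k} =
        ENNReal.ofReal (Real.exp (-(n * p)) * (n * p) ^ k / (Nat.factorial k))) ∧
      (∀ k : ℕ, μ {ω | B ω = k} =
        ENNReal.ofReal ((n.choose k : ℝ) * p ^ k * (1 - p) ^ (n - k))) ∧
      ∫ ω, |(L ω : ℝ) - (B ω : ℝ)| ∂μ ≤ n * p ^ 2 := by
  classical
  set X := coup p hp.2.le n with hX
  refine ⟨ℕ × ℕ, inferInstance, X.toMeasure, PMF.toMeasure.isProbabilityMeasure X,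
    Prod.fst, Prod.snd, measurable_fst, measurable_snd, ?_, ?_, ?_⟩
  · intro k
    have hset : {ω : ℕ × ℕ | Prod.fst ω = k} = Prod.fst ⁻¹' {k} := rfl
    rw [hset, ← Measure.map_apply measurable_fst (measurableSet_singleton k),
      PMF.toMeasure_map (p := X) (f := Prod.fst) measurable_fst,
      PMF.toMeasure_apply_singleton _ _ (measurableSet_singleton k)]
    exact coup_fst hp n k
  · intro k
    have hset : {ω : ℕ × ℕ | Prod.snd ω = k} = Prod.snd ⁻¹' {k} := rfl
    rw [hset, ← Measure.map_apply measurable_snd (measurableSet_singleton k),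
      PMF.toMeasure_map (p := X) (f := Prod.snd) measurable_snd,
      PMF.toMeasure_apply_singleton _ _ (measurableSet_singleton k)]
    exact coup_snd hp n k
  · have hmeas : Measurable (fun ω : ℕ × ℕ => |(ω.1 : ℝ) - (ω.2 : ℝ)|) :=
      measurable_of_countable _
    rw [MeasureTheory.integral_eq_lintegral_of_nonneg_ae
      (Filter.Eventually.of_forall fun ω => abs_nonneg _) hmeas.aestronglyMeasurable]
    have hlin : ∫⁻ ω, ENNReal.ofReal |(ω.1 : ℝ) - (ω.2 : ℝ)| ∂X.toMeasure = costE X := by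
      rw [lintegral_countable']
      rw [costE]
      apply tsum_congr
      intro z
      rw [PMF.toMeasure_apply_singleton _ _ (measurableSet_singleton z), mul_comm]
      rfl
    have hb : costE X ≤ ENNReal.ofReal ((n : ℝ) * p ^ 2) := by
      refine (coup_cost hp n).trans ?_
      rw [ENNReal.ofReal_mul (by positivity)]
      rw [ENNReal.ofReal_natCast]
    rw [hlin]
    exact ENNReal.toReal_le_of_le_ofReal (by positivity) hb
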